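/- The triple (kX_∞, ⋄, P) is the free Rota-Baxter algebra of weight λ on the set X: (kX_∞, ⋄) is a unital associative k-algebra, P satisfies the Rota-Baxter identity P(u)⋄P(v) = P(u⋄P(v)) + P(P(u)⋄v) + λP(u⋄v) for all u, v, and for every Rota-Baxter algebra (R, Q) of weight λ and every set map f : X → R there is a unique k-algebra homomorphism f̄ : kX_∞ → R with f̄ ∘ P = Q ∘ f̄ and f̄(j_X(x)) = f(x) for all x ∈ X, where j_X : X → kX_∞ is the inclusion of letters. -/

import Mathlib

open TensorProduct

universe u v

/-- Letters of Rota-Baxter bracketed words: either a variable from `X` or a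
bracketed word `⌊w⌋` (a list of letters). -/
inductive RBL (X : Type u) : Type u
  | var : X → RBL X
  | br : List (RBL X) → RBL X

namespace RBL

variable {X : Type u}

/-- `a.isBr = true` iff the letter `a` is a bracketed element `⌊w⌋ ∈ ⌊X_∞⌋`. -/
def isBr : RBL X → Bool
  | var _ => false
  | br _ => true

mutual
  /-- Validity of a letter: the inside of a bracket must be a Rota-Baxter bracketed word. -/
  def valid : RBL X → Prop
    | var _ => True
    | br l => wordValid l
  /-- `wordValid l` says that the list of letters `l` is a Rota-Baxter bracketed word,
  i.e. all letters are valid and the letters alternate (no two consecutive brackets). -/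
  def wordValid : List (RBL X) → Prop
    | [] => True
    | [a] => valid a
    | a :: b :: l => valid a ∧ ¬(a.isBr = true ∧ b.isBr = true) ∧ wordValid (b :: l)
end

lemma wordValid_nil : wordValid ([] : List (RBL X)) := by simp [wordValid]

lemma wordValid_var (x : X) : wordValid [var x] := by simp [wordValid, valid]

lemma wordValid_br {l : List (RBL X)} (h : wordValid l) : wordValid [br l] := by
  simpa [wordValid, valid] using h

mutual
  /-- The total degree of a letter. -/
  def degL : RBL X → ℕ
    | var _ => 1
    | br l => degW l + 1
  /-- The total degree of a word: the number of occurrences of brackets (i.e. of `P`)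
  plus the number of occurrences of letters of `X`. -/
  def degW : List (RBL X) → ℕ
    | [] => 0
    | a :: l => degL a + degW l
end

end RBL

/-- The set `X_∞` of Rota-Baxter bracketed words on `X`. -/
def RBWord (X : Type u) : Type u := {l : List (RBL X) // RBL.wordValid l}

namespace RBWord

variable {X : Type u}

/-- The empty word `1`. -/
def one : RBWord X := ⟨[], RBL.wordValid_nil⟩

/-- The total degree of a Rota-Baxter bracketed word. -/
def deg (w : RBWord X) : ℕ := RBL.degW w.1

end RBWord

variable (k : Type v) [CommRing k] (X : Type u)

/-- The free `k`-module `kX_∞` on the Rota-Baxter bracketed words. -/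
abbrev RBMod : Type max u v := RBWord X →₀ k

variable {X}

/-- A Rota-Baxter bracketed word viewed as a basis element of `kX_∞`. -/
noncomputable def sing (w : RBWord X) : RBMod k X := Finsupp.single w 1

variable (X)

/-- The Rota-Baxter operator `P` on `kX_∞`, sending a basis word `w` to `⌊w⌋`. -/
noncomputable def Pop : RBMod k X →ₗ[k] RBMod k X :=
  Finsupp.lmapDomain k k fun w => (⟨[RBL.br w.1], RBL.wordValid_br w.2⟩ : RBWord X)

/-- Concatenation on the left by `u₀` and on the right by `v₀`, as a linear map on `kX_∞`
(sending basis words whose concatenation is not valid to `0`; in all uses below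
the concatenations are valid). -/
noncomputable def concatLR (u₀ v₀ : List (RBL X)) : RBMod k X →ₗ[k] RBMod k X :=
  Finsupp.lsum k fun w =>
    letI := Classical.dec (RBL.wordValid (u₀ ++ w.1 ++ v₀))
    if h : RBL.wordValid (u₀ ++ w.1 ++ v₀) then
      Finsupp.lsingle (⟨u₀ ++ w.1 ++ v₀, h⟩ : RBWord X) else 0

/-- The counit `ε : kX_∞ → k`, `ε(1) = 1` and `ε(w) = 0` for basis words `w ≠ 1`. -/
noncomputable def eps : RBMod k X →ₗ[k] k := Finsupp.lapply RBWord.one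

/-- The homogeneous component `H^(n)` of `kX_∞`: the span of the basis words of total
degree `n`. -/
noncomputable def Hdeg (n : ℕ) : Submodule k (RBMod k X) :=
  Finsupp.supported k k {w : RBWord X | w.deg = n}

variable (lam : k)

/-- The data of the product `⋄` on the free Rota-Baxter algebra `kX_∞` of weight `lam`,
together with its recursive defining equations:
* if the concatenation of `u` and `v` is again a Rota-Baxter bracketed word (in particular
  if `u` or `v` is empty, or if the last letter of `u` or the first letter of `v` is a
  variable), then `u ⋄ v` is the concatenation `uv`;
* if `u = u₀⌊ā⌋` and `v = ⌊b̄⌋v₀`, then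
  `u ⋄ v = u₀(⌊⌊ā⌋ ⋄ b̄⌋ + ⌊ā ⋄ ⌊b̄⌋⌋ + λ⌊ā ⋄ b̄⌋)v₀`. -/
structure FreeRBAData where
  /-- the product `⋄`, as a `k`-bilinear map -/
  d : RBMod k X →ₗ[k] RBMod k X →ₗ[k] RBMod k X
  d_concat : ∀ (u v : RBWord X) (h : RBL.wordValid (u.1 ++ v.1)),
    d (sing k u) (sing k v) = sing k ⟨u.1 ++ v.1, h⟩
  d_br : ∀ (u₀ v₀ : List (RBL X)) (a b : RBWord X)
    (hu : RBL.wordValid (u₀ ++ [RBL.br a.1])) (hv : RBL.wordValid (RBL.br b.1 :: v₀)),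
    d (sing k ⟨u₀ ++ [RBL.br a.1], hu⟩) (sing k ⟨RBL.br b.1 :: v₀, hv⟩)
      = concatLR k X u₀ v₀
          (Pop k X (d (Pop k X (sing k a)) (sing k b))
            + Pop k X (d (sing k a) (Pop k X (sing k b)))
            + lam • Pop k X (d (sing k a) (sing k b)))

namespace FreeRBAData

variable {k X lam}

/-- The componentwise product `⋄ ⊗ ⋄` on `kX_∞ ⊗ kX_∞`. -/
noncomputable def mulT (D : FreeRBAData k X lam) :
    (RBMod k X ⊗[k] RBMod k X) →ₗ[k] (RBMod k X ⊗[k] RBMod k X) →ₗ[k]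
      (RBMod k X ⊗[k] RBMod k X) :=
  TensorProduct.map₂ D.d D.d

end FreeRBAData

/-- The free Rota-Baxter algebra `kX_∞` of weight `lam` together with the coproduct `Δ`,
characterized by its recursive defining equations:
`Δ(1) = 1 ⊗ 1`, `Δ(x) = x ⊗ 1 + 1 ⊗ x` for `x ∈ X`,
`Δ(⌊w⌋) = ⌊w⌋ ⊗ 1 + (id ⊗ P)Δ(w)`, and
`Δ(w₁ ⋄ ⋯ ⋄ w_m) = Δ(w₁) ⋄ ⋯ ⋄ Δ(w_m)` for the `⋄`-factorization of a word into its
(alternating) sequence of letters. -/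
structure FreeRBBialgData extends FreeRBAData k X lam where
  /-- the coproduct `Δ` -/
  Dl : RBMod k X →ₗ[k] (RBMod k X ⊗[k] RBMod k X)
  Dl_one : Dl (sing k RBWord.one) = sing k RBWord.one ⊗ₜ[k] sing k RBWord.one
  Dl_var : ∀ (x : X),
    Dl (sing k ⟨[RBL.var x], RBL.wordValid_var x⟩)
      = sing k ⟨[RBL.var x], RBL.wordValid_var x⟩ ⊗ₜ[k] sing k RBWord.one
        + sing k RBWord.one ⊗ₜ[k] sing k ⟨[RBL.var x], RBL.wordValid_var x⟩
  Dl_br : ∀ w : RBWord X,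
    Dl (Pop k X (sing k w))
      = Pop k X (sing k w) ⊗ₜ[k] sing k RBWord.one
        + TensorProduct.map LinearMap.id (Pop k X) (Dl (sing k w))
  Dl_cons : ∀ (a : RBL X) (l : List (RBL X)) (h : RBL.wordValid (a :: l))
    (ha : RBL.wordValid [a]) (hl : RBL.wordValid l), l ≠ [] →
    Dl (sing k ⟨a :: l, h⟩)
      = TensorProduct.map₂ d d (Dl (sing k ⟨[a], ha⟩)) (Dl (sing k ⟨l, hl⟩))

namespace RBL

variable {X : Type u}

lemma wordValid_map_var (s : List X) : wordValid (s.map RBL.var) := by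
  induction s with
  | nil => exact wordValid_nil
  | cons a t ih =>
    cases t with
    | nil => exact wordValid_var a
    | cons b t' =>
      simp only [List.map_cons] at ih ⊢
      exact ⟨by simp [valid], by simp [isBr], ih⟩

end RBL

variable {X}

/-- The word `x₁ ⋯ x_m ∈ M(X)` as a basis element of `kX_∞`. -/
noncomputable def varWord (s : List X) : RBMod k X :=
  sing k ⟨s.map RBL.var, RBL.wordValid_map_var s⟩

/-- A letter in `X ∪ ⌊X_∞⌋`, viewed as a basis element of `kX_∞` (invalid letters are
sent to `0`; they do not occur below). -/
noncomputable def letterMod (a : RBL X) : RBMod k X :=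
  letI := Classical.dec (RBL.wordValid [a])
  if h : RBL.wordValid [a] then sing k ⟨[a], h⟩ else 0

variable (X)

/-- The tensor product `H^(p) ⊗ H^(q)` of homogeneous components, as a submodule of
`kX_∞ ⊗ kX_∞`. -/
noncomputable def HdegT (p q : ℕ) : Submodule k (RBMod k X ⊗[k] RBMod k X) :=
  Submodule.map₂ (TensorProduct.mk k (RBMod k X) (RBMod k X)) (Hdeg k X p) (Hdeg k X q)

namespace FreeRBAData

variable {k X lam}

/-- The `⋄`-product `w₁ ⋄ (w₂ ⋄ (⋯ ⋄ (w_m ⋄ 1)))` of a sequence of letters. -/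
noncomputable def prodList (D : FreeRBAData k X lam) (l : List (RBL X)) : RBMod k X :=
  l.foldr (fun a acc => D.d (letterMod k a) acc) (sing k RBWord.one)

end FreeRBAData
universe w

section Aux

open RBL

variable {k : Type v} [CommRing k] {X : Type u}

namespace RBL

/-- Compatibility of adjacent letters. -/
def ok (a b : RBL X) : Prop := ¬(a.isBr = true ∧ b.isBr = true)

lemma wordValid_iff (l : List (RBL X)) :
    wordValid l ↔ (∀ a ∈ l, valid a) ∧ l.Chain' ok := by
  induction l with
  | nil => simp [wordValid, List.Chain']
  | cons a t ih =>
    cases t with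
    | nil => simp [wordValid, List.Chain']
    | cons b t' =>
      rw [wordValid, ih]
      constructor
      · rintro ⟨h1, h2, h3, h4⟩
        refine ⟨?_, ?_⟩
        · intro x hx
          rcases List.mem_cons.mp hx with rfl | hx
          · exact h1
          · exact h3 x hx
        · exact List.isChain_cons_cons.mpr ⟨h2, h4⟩
      · rintro ⟨h1, h2⟩
        rcases List.isChain_cons_cons.mp h2 with ⟨h2a, h2b⟩
        exact ⟨h1 a (by simp), h2a, fun x hx => h1 x (by simp [hx]), h2b⟩

lemma wordValid_append_iff (l₁ l₂ : List (RBL X)) :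
    wordValid (l₁ ++ l₂) ↔ wordValid l₁ ∧ wordValid l₂ ∧
      ∀ x ∈ l₁.getLast?, ∀ y ∈ l₂.head?, ok x y := by
  simp only [wordValid_iff, List.Chain', List.isChain_append]
  constructor
  · rintro ⟨h1, h2, h3, h4⟩
    exact ⟨⟨fun a ha => h1 a (by simp [ha]), h2⟩, ⟨fun a ha => h1 a (by simp [ha]), h3⟩, h4⟩
  · rintro ⟨⟨ha1, ha2⟩, ⟨hb1, hb2⟩, h4⟩
    refine ⟨?_, ha2, hb2, h4⟩
    intro a ha
    rcases List.mem_append.mp ha with h | h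
    · exact ha1 a h
    · exact hb1 a h

lemma wordValid.left {l₁ l₂ : List (RBL X)} (h : wordValid (l₁ ++ l₂)) : wordValid l₁ :=
  ((wordValid_append_iff l₁ l₂).mp h).1

lemma wordValid.right {l₁ l₂ : List (RBL X)} (h : wordValid (l₁ ++ l₂)) : wordValid l₂ :=
  ((wordValid_append_iff l₁ l₂).mp h).2.1

lemma wordValid_br_iff (l : List (RBL X)) : wordValid [br l] ↔ wordValid l := by
  simp [wordValid, valid]

/-- head bracket indicator of a list. -/
def hB (l : List (RBL X)) : Bool := (l.head?.map isBr).getD false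

/-- last bracket indicator of a list. -/
def lB (l : List (RBL X)) : Bool := (l.getLast?.map isBr).getD false

lemma hB_cons (a : RBL X) (l : List (RBL X)) : hB (a :: l) = a.isBr := rfl

lemma lB_concat (l : List (RBL X)) (a : RBL X) : lB (l ++ [a]) = a.isBr := by
  simp [lB, List.getLast?_append]

lemma hB_append_of_ne_nil (l₁ l₂ : List (RBL X)) (h : l₁ ≠ []) :
    hB (l₁ ++ l₂) = hB l₁ := by
  cases l₁ with
  | nil => exact absurd rfl h
  | cons a t => simp [hB]

lemma lB_append_of_ne_nil (l₁ l₂ : List (RBL X)) (h : l₂ ≠ []) :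
    lB (l₁ ++ l₂) = lB l₂ := by
  simp [lB, List.getLast?_append_of_ne_nil _ h]

lemma wordValid_append {l₁ l₂ : List (RBL X)} (h1 : wordValid l₁) (h2 : wordValid l₂)
    (h : ¬(lB l₁ = true ∧ hB l₂ = true)) : wordValid (l₁ ++ l₂) := by
  rw [wordValid_append_iff]
  refine ⟨h1, h2, ?_⟩
  intro x hx y hy
  intro ⟨hx', hy'⟩
  apply h
  constructor
  · rw [lB, hx]; simpa using hx'
  · rw [hB, hy]; simpa using hy'

lemma junction_ok {l₁ l₂ : List (RBL X)} (h : wordValid (l₁ ++ l₂)) :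
    ¬(lB l₁ = true ∧ hB l₂ = true) := by
  rintro ⟨ha, hb⟩
  rcases ((wordValid_append_iff l₁ l₂).mp h) with ⟨-, -, hj⟩
  unfold lB at ha; unfold hB at hb
  cases hx : l₁.getLast? with
  | none => rw [hx] at ha; simp at ha
  | some x =>
    cases hy : l₂.head? with
    | none => rw [hy] at hb; simp at hb
    | some y =>
      rw [hx] at ha; rw [hy] at hb; simp at ha hb
      exact hj x hx y hy ⟨ha, hb⟩

end RBL

end Aux

section Aux2

open RBL

variable {k : Type v} [CommRing k] {X : Type u}

/-- A list of letters viewed as an element of `kX_∞` (zero if not a valid word). -/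
noncomputable def ws (l : List (RBL X)) : RBMod k X :=
  letI := Classical.dec (RBL.wordValid l)
  if h : RBL.wordValid l then sing k ⟨l, h⟩ else 0

variable (k)

lemma ws_eq_sing {l : List (RBL X)} (h : RBL.wordValid l) :
    (ws l : RBMod k X) = sing k ⟨l, h⟩ := dif_pos h

lemma ws_invalid {l : List (RBL X)} (h : ¬ RBL.wordValid l) :
    (ws l : RBMod k X) = 0 := dif_neg h

lemma sing_eq_ws (w : RBWord X) : sing k w = (ws w.1 : RBMod k X) :=
  (ws_eq_sing k w.2).symm

lemma Pop_sing (w : RBWord X) :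
    Pop k X (sing k w) = sing k ⟨[br w.1], RBL.wordValid_br w.2⟩ := by
  unfold Pop sing
  erw [Finsupp.lmapDomain_apply, Finsupp.mapDomain_single]

lemma Pop_ws (l : List (RBL X)) : Pop k X (ws l) = (ws [br l] : RBMod k X) := by
  by_cases h : RBL.wordValid l
  · erw [ws_eq_sing k h, Pop_sing, ws_eq_sing k (RBL.wordValid_br h)]
  · rw [ws_invalid k h, map_zero, ws_invalid]
    rw [RBL.wordValid_br_iff]
    exact h

lemma concatLR_sing (u₀ v₀ : List (RBL X)) (w : RBWord X) :
    concatLR k X u₀ v₀ (sing k w) = (ws (u₀ ++ w.1 ++ v₀) : RBMod k X) := by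
  unfold concatLR sing
  rw [Finsupp.lsum_single]
  by_cases h : RBL.wordValid (u₀ ++ w.1 ++ v₀)
  · erw [dif_pos h, ws_eq_sing k h, Finsupp.lsingle_apply]; rfl
  · rw [dif_neg h, ws_invalid k h, LinearMap.zero_apply]

lemma concatLR_ws (u₀ v₀ l : List (RBL X)) (h : RBL.wordValid l) :
    concatLR k X u₀ v₀ (ws l) = (ws (u₀ ++ l ++ v₀) : RBMod k X) := by
  erw [ws_eq_sing k h, concatLR_sing]

lemma single_eq_smul_sing (w : RBWord X) (b : k) :
    (Finsupp.single w b : RBMod k X) = b • sing k w := by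
  unfold sing
  rw [Finsupp.smul_single, smul_eq_mul, mul_one]

lemma lhom_ext_sing {M : Type*} [AddCommMonoid M] [Module k M]
    {g h : RBMod k X →ₗ[k] M} (H : ∀ w : RBWord X, g (sing k w) = h (sing k w)) :
    g = h := by
  apply Finsupp.lhom_ext
  intro w b
  rw [single_eq_smul_sing, map_smul, map_smul, H w]

lemma apply_eq_of_supp {M : Type*} [AddCommMonoid M] [Module k M]
    {g h : RBMod k X →ₗ[k] M} {x : RBMod k X} {S : Set (RBWord X)}
    (hx : ∀ p ∈ x.support, p ∈ S)
    (H : ∀ p ∈ S, g (sing k p) = h (sing k p)) : g x = h x := by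
  rw [← Finsupp.sum_single x, Finsupp.sum, map_sum, map_sum]
  refine Finset.sum_congr rfl fun p hp => ?_
  rw [single_eq_smul_sing, map_smul, map_smul, H p (hx p hp)]

lemma supp_Pop (x : RBMod k X) :
    ∀ p ∈ (Pop k X x).support, ∃ m ∈ x.support, p.1 = [br m.1] := by
  classical
  intro p hp
  unfold Pop at hp
  erw [Finsupp.lmapDomain_apply] at hp
  have := Finsupp.mapDomain_support hp
  rcases Finset.mem_image.mp this with ⟨m, hm, hpm⟩
  exact ⟨m, hm, by rw [← hpm]⟩

lemma supp_concatLR (u₀ v₀ : List (RBL X)) (x : RBMod k X) :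
    ∀ p ∈ (concatLR k X u₀ v₀ x).support, ∃ m ∈ x.support, p.1 = u₀ ++ m.1 ++ v₀ := by
  classical
  intro p hp
  unfold concatLR at hp
  rw [Finsupp.lsum_apply] at hp
  have := Finsupp.support_sum hp
  rcases Finset.mem_biUnion.mp this with ⟨m, hm, hpm⟩
  refine ⟨m, hm, ?_⟩
  by_cases h : RBL.wordValid (u₀ ++ m.1 ++ v₀)
  · rw [dif_pos h] at hpm
    have := Finsupp.support_single_subset hpm
    rcases Finset.mem_singleton.mp this with rfl
    rfl
  · rw [dif_neg h] at hpm
    simp at hpm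

end Aux2
section Aux3

open RBL

variable {k : Type v} [CommRing k] {X : Type u} {lam : k}

lemma one_ws : sing k RBWord.one = (ws [] : RBMod k X) := sing_eq_ws k RBWord.one

lemma supp_sing (w : RBWord X) : (sing k w).support ⊆ {w} :=
  Finsupp.support_single_subset

lemma concatLR_comp_left (u₀ m₀ v₀ : List (RBL X)) :
    (concatLR k X u₀ []).comp (concatLR k X m₀ v₀) = concatLR k X (u₀ ++ m₀) v₀ := by
  apply lhom_ext_sing
  intro w
  rw [LinearMap.comp_apply, concatLR_sing, concatLR_sing]
  by_cases h : wordValid (m₀ ++ w.1 ++ v₀)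
  · rw [concatLR_ws k _ _ _ h]
    congr 1
    simp [List.append_assoc]
  · rw [ws_invalid k h, map_zero, ws_invalid]
    intro hc
    apply h
    have : u₀ ++ m₀ ++ w.1 ++ v₀ = u₀ ++ (m₀ ++ w.1 ++ v₀) := by
      simp [List.append_assoc]
    rw [this] at hc
    exact hc.right

lemma concatLR_comp_right (u₀ m₀ v₀ : List (RBL X)) :
    (concatLR k X [] v₀).comp (concatLR k X u₀ m₀) = concatLR k X u₀ (m₀ ++ v₀) := by
  apply lhom_ext_sing
  intro w
  rw [LinearMap.comp_apply, concatLR_sing, concatLR_sing]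
  by_cases h : wordValid (u₀ ++ w.1 ++ m₀)
  · rw [concatLR_ws k _ _ _ h]
    congr 1
    simp [List.append_assoc]
  · rw [ws_invalid k h, map_zero, ws_invalid]
    intro hc
    apply h
    have : u₀ ++ w.1 ++ (m₀ ++ v₀) = (u₀ ++ w.1 ++ m₀) ++ v₀ := by
      simp [List.append_assoc]
    rw [this] at hc
    exact hc.left

variable (D : FreeRBAData k X lam)

lemma d_concat' {u v : List (RBL X)} (h : wordValid (u ++ v)) :
    D.d (ws u) (ws v) = (ws (u ++ v) : RBMod k X) := by
  rw [ws_eq_sing k h.left, ws_eq_sing k h.right, D.d_concat ⟨u, h.left⟩ ⟨v, h.right⟩ h,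
    ws_eq_sing k h]

/-- The bracket-interaction term. -/
noncomputable def Tel (a b : List (RBL X)) : RBMod k X :=
  Pop k X (D.d (Pop k X (ws a)) (ws b)) + Pop k X (D.d (ws a) (Pop k X (ws b)))
    + lam • Pop k X (D.d (ws a) (ws b))

lemma d_br' {u₀ v₀ a b : List (RBL X)} (hu : wordValid (u₀ ++ [br a]))
    (hv : wordValid (br b :: v₀)) :
    D.d (ws (u₀ ++ [br a])) (ws (br b :: v₀)) = concatLR k X u₀ v₀ (Tel D a b) := by
  have ha : wordValid a := (wordValid_br_iff a).mp hu.right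
  have hb : wordValid b := by
    have := ((wordValid_iff _).mp hv).1 (br b) (by simp)
    simpa [valid] using this
  rw [ws_eq_sing k hu, ws_eq_sing k hv]
  have := D.d_br u₀ v₀ ⟨a, ha⟩ ⟨b, hb⟩ hu hv
  rw [this]
  congr 1
  unfold Tel
  rw [ws_eq_sing k ha, ws_eq_sing k hb]

lemma d_one_left : ∀ f : RBMod k X, D.d (sing k RBWord.one) f = f := by
  have : D.d (sing k RBWord.one) = LinearMap.id := by
    apply lhom_ext_sing
    intro w
    rw [one_ws, sing_eq_ws, d_concat' D (show wordValid ([] ++ w.1) from w.2)]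
    rfl
  intro f; rw [this]; rfl

lemma d_one_right : ∀ f : RBMod k X, D.d f (sing k RBWord.one) = f := by
  have : D.d.flip (sing k RBWord.one) = LinearMap.id := by
    apply lhom_ext_sing
    intro w
    show D.d (sing k w) (sing k RBWord.one) = sing k w
    rw [one_ws, sing_eq_ws]
    rw [d_concat' D (show wordValid (w.1 ++ []) by rw [List.append_nil]; exact w.2)]
    rw [List.append_nil]
  intro f
  have := LinearMap.congr_fun this f
  exact this

lemma supp_Tel (a b : List (RBL X)) :
    ∀ m ∈ (Tel D a b).support, ∃ s, m.1 = [br s] := by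
  classical
  intro m hm
  unfold Tel at hm
  rcases Finset.mem_union.mp (Finsupp.support_add hm) with h | h
  · rcases Finset.mem_union.mp (Finsupp.support_add h) with h | h
    · obtain ⟨s, _, hs⟩ := supp_Pop k _ m h
      exact ⟨s.1, hs⟩
    · obtain ⟨s, _, hs⟩ := supp_Pop k _ m h
      exact ⟨s.1, hs⟩
  · obtain ⟨s, _, hs⟩ := supp_Pop k _ m (Finsupp.support_smul h)
    exact ⟨s.1, hs⟩

end Aux3
section Aux4

open RBL

variable {k : Type v} [CommRing k] {X : Type u} {lam : k} (D : FreeRBAData k X lam)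

lemma d_left {u₀ m : List (RBL X)} (hm : m ≠ []) (h : wordValid (u₀ ++ m)) :
    D.d (ws (u₀ ++ m)) = (concatLR k X u₀ []).comp (D.d (ws m)) := by
  apply lhom_ext_sing
  intro y
  rw [LinearMap.comp_apply, sing_eq_ws]
  rcases List.eq_nil_or_concat m with rfl | ⟨m₀, c, rfl⟩
  · exact absurd rfl hm
  simp only [List.concat_eq_append] at h ⊢
  obtain ⟨ly, hy⟩ := y
  show D.d (ws (u₀ ++ (m₀ ++ [c]))) (ws ly)
      = concatLR k X u₀ [] (D.d (ws (m₀ ++ [c])) (ws ly))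
  cases ly with
  | nil =>
    rw [show (ws [] : RBMod k X) = sing k RBWord.one from one_ws.symm, d_one_right,
      d_one_right, concatLR_ws k _ _ _ h.right]
    congr 1
    simp
  | cons yh yt =>
    by_cases hj : c.isBr = true ∧ yh.isBr = true
    · obtain ⟨a, rfl⟩ : ∃ a, c = br a := by
        cases c with
        | var x => simp [isBr] at hj
        | br a => exact ⟨a, rfl⟩
      obtain ⟨b, rfl⟩ : ∃ b, yh = br b := by
        cases yh with
        | var x => simp [isBr] at hj
        | br b => exact ⟨b, rfl⟩
      have h1 : wordValid ((u₀ ++ m₀) ++ [br a]) := by rwa [List.append_assoc]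
      have e1 : u₀ ++ (m₀ ++ [br a]) = (u₀ ++ m₀) ++ [br a] := (List.append_assoc _ _ _).symm
      rw [e1, d_br' D h1 hy, d_br' D h.right hy, ← LinearMap.comp_apply, concatLR_comp_left]
    · have hy' : wordValid ((m₀ ++ [c]) ++ (yh :: yt)) := by
        apply wordValid_append h.right hy
        rw [lB_concat, hB_cons]; exact hj
      have hy'' : wordValid ((u₀ ++ (m₀ ++ [c])) ++ (yh :: yt)) := by
        apply wordValid_append h hy
        rw [lB_append_of_ne_nil _ _ (by simp), lB_concat, hB_cons]; exact hj
      rw [d_concat' D hy'', d_concat' D hy', concatLR_ws k _ _ _ hy']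
      congr 1
      simp [List.append_assoc]

lemma d_right {m v₀ : List (RBL X)} (hm : m ≠ []) (h : wordValid (m ++ v₀)) :
    D.d.flip (ws (m ++ v₀)) = (concatLR k X [] v₀).comp (D.d.flip (ws m)) := by
  apply lhom_ext_sing
  intro y
  rw [LinearMap.comp_apply]
  show D.d (sing k y) (ws (m ++ v₀)) = concatLR k X [] v₀ (D.d (sing k y) (ws m))
  rw [sing_eq_ws]
  cases m with
  | nil => exact absurd rfl hm
  | cons c m' =>
  obtain ⟨ly, hy⟩ := y
  show D.d (ws ly) (ws ((c :: m') ++ v₀)) = concatLR k X [] v₀ (D.d (ws ly) (ws (c :: m')))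
  rcases List.eq_nil_or_concat ly with hly | ⟨x₀, e, rfl⟩
  · subst hly
    rw [show (ws [] : RBMod k X) = sing k RBWord.one from one_ws.symm, d_one_left, d_one_left,
      concatLR_ws k _ _ _ h.left]
    congr 1
  · simp only [List.concat_eq_append] at hy ⊢
    by_cases hj : e.isBr = true ∧ c.isBr = true
    · obtain ⟨a, rfl⟩ : ∃ a, e = br a := by
        cases e with
        | var x => simp [isBr] at hj
        | br a => exact ⟨a, rfl⟩
      obtain ⟨b, rfl⟩ : ∃ b, c = br b := by
        cases c with
        | var x => simp [isBr] at hj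
        | br b => exact ⟨b, rfl⟩
      rw [List.cons_append]
      have h1 : wordValid (br b :: (m' ++ v₀)) := by
        rw [← List.cons_append]; exact h
      rw [d_br' D hy h1, d_br' D hy h.left, ← LinearMap.comp_apply, concatLR_comp_right]
    · have h1 : wordValid ((x₀ ++ [e]) ++ ((c :: m') ++ v₀)) := by
        apply wordValid_append hy h
        rw [lB_concat, hB_append_of_ne_nil _ _ (by simp), hB_cons]; exact hj
      have h2 : wordValid ((x₀ ++ [e]) ++ (c :: m')) := by
        apply wordValid_append hy h.left
        rw [lB_concat, hB_cons]; exact hj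
      rw [d_concat' D h1, d_concat' D h2, concatLR_ws k _ _ _ h2]
      congr 1
      simp [List.append_assoc]

lemma supp_d {u v : List (RBL X)} (hu : u ≠ []) (hv : v ≠ [])
    (hwu : wordValid u) (hwv : wordValid v) :
    ∀ p ∈ (D.d (ws u) (ws v)).support,
      p.1 ≠ [] ∧ hB p.1 = hB u ∧ lB p.1 = lB v := by
  intro p hp
  by_cases hj : lB u = true ∧ hB v = true
  · rcases List.eq_nil_or_concat u with rfl | ⟨u₀, c, rfl⟩
    · exact absurd rfl hu
    simp only [List.concat_eq_append] at hwu hj hp ⊢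
    obtain ⟨a, rfl⟩ : ∃ a, c = br a := by
      have h1 := hj.1
      rw [lB_concat] at h1
      cases c with
      | var x => simp [isBr] at h1
      | br a => exact ⟨a, rfl⟩
    cases v with
    | nil => exact absurd rfl hv
    | cons cv v₀ =>
    obtain ⟨b, rfl⟩ : ∃ b, cv = br b := by
      have h1 := hj.2
      rw [hB_cons] at h1
      cases cv with
      | var x => simp [isBr] at h1
      | br b => exact ⟨b, rfl⟩
    rw [d_br' D hwu hwv] at hp
    obtain ⟨m, hm, hpm⟩ := supp_concatLR k u₀ v₀ _ p hp
    obtain ⟨s, hs⟩ := supp_Tel D a b m hm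
    rw [hs] at hpm
    refine ⟨by rw [hpm]; simp, ?_, ?_⟩
    · rw [hpm]
      cases u₀ with
      | nil => simp [hB, isBr]
      | cons q u₀' =>
        rw [List.append_assoc, hB_append_of_ne_nil _ _ (by simp),
          hB_append_of_ne_nil _ _ (by simp)]
    · rw [hpm]
      cases v₀ with
      | nil => simp [lB, isBr, List.getLast?_append]
      | cons q v₀' =>
        rw [lB_append_of_ne_nil _ _ (by simp : (q :: v₀' : List (RBL X)) ≠ []),
          show (br b :: q :: v₀' : List (RBL X)) = [br b] ++ (q :: v₀') from rfl,
          lB_append_of_ne_nil _ _ (by simp : (q :: v₀' : List (RBL X)) ≠ [])]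
  · have hc : wordValid (u ++ v) := wordValid_append hwu hwv hj
    rw [d_concat' D hc, ws_eq_sing k hc] at hp
    have hp1 : p = ⟨u ++ v, hc⟩ := Finset.mem_singleton.mp (supp_sing _ hp)
    subst hp1
    exact ⟨by simp [hu], hB_append_of_ne_nil _ _ hu, lB_append_of_ne_nil _ _ hv⟩

end Aux4
section Aux5

open RBL

variable {k : Type v} [CommRing k] {X : Type u} {lam : k} (D : FreeRBAData k X lam)

lemma concatLR_nil_nil :
    concatLR k X [] [] = (LinearMap.id : RBMod k X →ₗ[k] RBMod k X) := by
  apply lhom_ext_sing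
  intro w
  rw [concatLR_sing]
  simp only [List.nil_append, List.append_nil]
  rw [← sing_eq_ws]
  rfl

lemma d_rb_ws (a b : List (RBL X)) (ha : wordValid a) (hb : wordValid b) :
    D.d (Pop k X (ws a)) (Pop k X (ws b))
      = Pop k X (D.d (ws a) (Pop k X (ws b))) + Pop k X (D.d (Pop k X (ws a)) (ws b))
        + lam • Pop k X (D.d (ws a) (ws b)) := by
  have h1 : wordValid (([] : List (RBL X)) ++ [br a]) := by
    simpa [wordValid_br_iff] using ha
  have h2 : wordValid (br b :: ([] : List (RBL X))) := by
    simpa [wordValid_br_iff] using hb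
  have hbr := d_br' D h1 h2
  simp only [List.nil_append] at hbr
  rw [Pop_ws, Pop_ws, hbr, concatLR_nil_nil, LinearMap.id_apply]
  unfold Tel
  rw [Pop_ws, Pop_ws]
  abel

lemma d_rb (f g : RBMod k X) :
    D.d (Pop k X f) (Pop k X g)
      = Pop k X (D.d f (Pop k X g)) + Pop k X (D.d (Pop k X f) g)
        + lam • Pop k X (D.d f g) := by
  induction f using Finsupp.induction_linear with
  | zero => simp
  | add f₁ f₂ hf₁ hf₂ =>
    simp only [map_add, LinearMap.add_apply, hf₁, hf₂, smul_add]
    abel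
  | single w c =>
    induction g using Finsupp.induction_linear with
    | zero => simp
    | add g₁ g₂ hg₁ hg₂ =>
      simp only [map_add, LinearMap.add_apply, LinearMap.map_add, hg₁, hg₂, smul_add]
      abel
    | single w' c' =>
      rw [single_eq_smul_sing, single_eq_smul_sing, sing_eq_ws k w, sing_eq_ws k w']
      simp only [map_smul, LinearMap.smul_apply, LinearMap.map_smul]
      rw [d_rb_ws D w.1 w'.1 w.2 w'.2]
      simp only [smul_add]
      rw [smul_comm lam c', smul_comm lam c]

end Aux5
section Aux6

open RBL

variable {k : Type v} [CommRing k] {X : Type u} {lam : k} (D : FreeRBAData k X lam)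

namespace RBL

lemma degL_pos (a : RBL X) : 0 < degL a := by
  cases a <;> simp [degL]

lemma degW_cons (a : RBL X) (l : List (RBL X)) : degW (a :: l) = degL a + degW l := by
  simp [degW]

lemma degW_append (l₁ l₂ : List (RBL X)) : degW (l₁ ++ l₂) = degW l₁ + degW l₂ := by
  induction l₁ with
  | nil => simp [degW]
  | cons a t ih => simp [degW_cons, ih]; omega

lemma nil_of_degW_eq_zero {l : List (RBL X)} (h : degW l = 0) : l = [] := by
  cases l with
  | nil => rfl
  | cons a t =>
    rw [degW_cons] at h
    have := degL_pos a
    omega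

lemma degW_br (l : List (RBL X)) : degW [br l] = degW l + 1 := by
  simp [degW, degL]

lemma degW_nil : degW ([] : List (RBL X)) = 0 := by simp [degW]

lemma lB_singleton (a : RBL X) : lB [a] = a.isBr := by simp [lB]

lemma hB_singleton (a : RBL X) : hB [a] = a.isBr := rfl

end RBL

lemma concatLR_nil_sing (u₀ : List (RBL X)) (w : RBWord X) :
    concatLR k X u₀ [] (sing k w) = (ws (u₀ ++ w.1) : RBMod k X) := by
  rw [concatLR_sing, List.append_nil]

lemma concatLR_sing_left_nil (v₀ : List (RBL X)) (w : RBWord X) :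
    concatLR k X [] v₀ (sing k w) = (ws (w.1 ++ v₀) : RBMod k X) := by
  rw [concatLR_sing, List.nil_append]

lemma d_right_apply {m v₀ : List (RBL X)} (hm : m ≠ []) (h : wordValid (m ++ v₀))
    (x : RBMod k X) :
    D.d x (ws (m ++ v₀)) = concatLR k X [] v₀ (D.d x (ws m)) := by
  have := LinearMap.congr_fun (d_right D hm h) x
  simpa only [LinearMap.flip_apply, LinearMap.comp_apply] using this

lemma d_assoc_key (N : ℕ) : ∀ (L : ℕ) (u v w : List (RBL X)), wordValid u → wordValid v →
    wordValid w → degW u + degW v + degW w ≤ N → u.length + v.length + w.length ≤ L →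
    D.d (D.d (ws u) (ws v)) (ws w) = D.d (ws u) (D.d (ws v) (ws w)) := by
  induction N with
  | zero =>
    intro L u v w hu hv hw hd hl
    have hun : u = [] := nil_of_degW_eq_zero (by omega)
    subst hun
    rw [← one_ws, d_one_left, d_one_left]
  | succ N ihN =>
    intro L
    induction L with
    | zero =>
      intro u v w hu hv hw hd hl
      have hun : u = [] := List.length_eq_zero_iff.mp (by omega)
      subst hun
      rw [← one_ws, d_one_left, d_one_left]
    | succ L ihL =>
      intro u v w hu hv hw hd hl
      by_cases hun : u = []
      · subst hun; rw [← one_ws, d_one_left, d_one_left]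
      by_cases hvn : v = []
      · subst hvn; rw [← one_ws, d_one_right D, d_one_left]
      by_cases hwn : w = []
      · subst hwn; rw [← one_ws]; simp only [d_one_right D]
      by_cases hu2 : 2 ≤ u.length
      -- ============ Case A : breadth of u at least 2 ============
      · rcases List.eq_nil_or_concat u with rfl | ⟨u₀, c, rfl⟩
        · exact absurd rfl hun
        simp only [List.concat_eq_append] at hu hd hl hu2 ⊢
        have hu₀ : u₀ ≠ [] := by
          intro h0; subst h0; simp at hu2
        have hc1 : wordValid [c] := hu.right
        have IH := ihL [c] v w hc1 hv hw
          (by rw [degW_append] at hd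
              simp only [degW_cons, degW_nil] at hd ⊢
              omega)
          (by have h1 : 0 < u₀.length := List.length_pos_iff.mpr hu₀
              simp only [List.length_append, List.length_cons, List.length_nil] at hl ⊢
              omega)
        rw [d_left D (show [c] ≠ [] by simp) hu]
        simp only [LinearMap.comp_apply]
        rw [← IH]
        have hsupp : ∀ p ∈ (D.d (ws [c]) (ws v)).support,
            p ∈ {p : RBWord X | p.1 ≠ [] ∧ hB p.1 = hB [c]} := by
          intro p hp
          obtain ⟨h1, h2, -⟩ := supp_d D (by simp) hvn hc1 hv p hp
          exact ⟨h1, h2⟩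
        have key := apply_eq_of_supp k
          (g := (D.d.flip (ws w)).comp (concatLR k X u₀ []))
          (h := (concatLR k X u₀ []).comp (D.d.flip (ws w)))
          (x := D.d (ws [c]) (ws v)) hsupp ?_
        · simpa only [LinearMap.comp_apply, LinearMap.flip_apply] using key
        · intro p hp
          simp only [LinearMap.comp_apply, LinearMap.flip_apply, concatLR_nil_sing]
          have hup : wordValid (u₀ ++ p.1) := by
            apply wordValid_append hu.left p.2
            rw [hp.2]
            exact junction_ok hu
          rw [d_left D hp.1 hup, LinearMap.comp_apply, sing_eq_ws]
      by_cases hw2 : 2 ≤ w.length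
      -- ============ Case B : breadth of w at least 2 ============
      · cases w with
        | nil => exact absurd rfl hwn
        | cons e w₀ =>
        have hw₀ : w₀ ≠ [] := by
          intro h0; subst h0; simp at hw2
        rw [show (e :: w₀ : List (RBL X)) = [e] ++ w₀ from rfl] at hw hd hl ⊢
        have he1 : wordValid [e] := hw.left
        have hw0 : wordValid w₀ := hw.right
        have IH := ihL u v [e] hu hv he1
          (by rw [degW_append] at hd
              simp only [degW_cons, degW_nil] at hd ⊢
              omega)
          (by have h1 : 0 < w₀.length := List.length_pos_iff.mpr hw₀
              simp only [List.length_append, List.length_cons, List.length_nil] at hl ⊢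
              omega)
        rw [d_right_apply D (show [e] ≠ [] by simp) hw (D.d (ws u) (ws v)),
          d_right_apply D (show [e] ≠ [] by simp) hw (ws v), IH]
        have hsupp : ∀ p ∈ (D.d (ws v) (ws [e])).support,
            p ∈ {p : RBWord X | p.1 ≠ [] ∧ lB p.1 = lB [e]} := by
          intro p hp
          obtain ⟨h1, -, h2⟩ := supp_d D hvn (by simp) hv he1 p hp
          exact ⟨h1, h2⟩
        have key := apply_eq_of_supp k
          (g := (D.d (ws u)).comp (concatLR k X [] w₀))
          (h := (concatLR k X [] w₀).comp (D.d (ws u)))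
          (x := D.d (ws v) (ws [e])) hsupp ?_
        · simpa only [LinearMap.comp_apply] using key.symm
        · intro p hp
          simp only [LinearMap.comp_apply, concatLR_sing_left_nil]
          have hpw : wordValid (p.1 ++ w₀) := by
            apply wordValid_append p.2 hw0
            rw [hp.2, lB_singleton]
            have := junction_ok hw
            rwa [lB_singleton] at this
          rw [d_right_apply D hp.1 hpw (ws u), sing_eq_ws]
      by_cases hv2 : 2 ≤ v.length
      -- ============ Case C : breadth of v at least 2 ============
      · cases v with
        | nil => exact absurd rfl hvn
        | cons c v₀ =>
        have hv₀ : v₀ ≠ [] := by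
          intro h0; subst h0; simp at hv2
        rw [show (c :: v₀ : List (RBL X)) = [c] ++ v₀ from rfl] at hv ⊢
        have hc1 : wordValid [c] := hv.left
        have hv0 : wordValid v₀ := hv.right
        have hSZ : ∀ p ∈ (D.d (ws u) (ws [c])).support,
            p ∈ {p : RBWord X | p.1 ≠ [] ∧ lB p.1 = lB [c]} := by
          intro p hp
          obtain ⟨h1, -, h2⟩ := supp_d D hun (by simp) hu hc1 p hp
          exact ⟨h1, h2⟩
        have hSW : ∀ q ∈ (D.d (ws v₀) (ws w)).support,
            q ∈ {q : RBWord X | q.1 ≠ [] ∧ hB q.1 = hB v₀} := by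
          intro q hq
          obtain ⟨h1, h2, -⟩ := supp_d D hv₀ hwn hv0 hw q hq
          exact ⟨h1, h2⟩
        -- junction between [c] and v₀ is compatible
        have hjc := junction_ok hv
        rw [lB_singleton] at hjc
        -- small fact : for p with lB p.1 = isBr c and q with hB q.1 = hB v₀,
        -- concatenation is valid
        have hval : ∀ p : RBWord X, p.1 ≠ [] → lB p.1 = lB [c] →
            ∀ q : RBWord X, q.1 ≠ [] → hB q.1 = hB v₀ → wordValid (p.1 ++ q.1) := by
          intro p hp1 hp2 q hq1 hq2
          apply wordValid_append p.2 q.2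
          rw [hp2, hq2, lB_singleton]
          exact hjc
        -- inner expansion : d (sing p) W = concatLR p.1 [] W for p in S₁
        have inner1 : ∀ p : RBWord X, p.1 ≠ [] → lB p.1 = lB [c] →
            D.d (sing k p) (D.d (ws v₀) (ws w))
              = concatLR k X p.1 [] (D.d (ws v₀) (ws w)) := by
          intro p hp1 hp2
          refine apply_eq_of_supp k (g := D.d (sing k p)) (h := concatLR k X p.1 [])
            (x := D.d (ws v₀) (ws w)) hSW ?_
          intro q hq
          rw [concatLR_nil_sing, sing_eq_ws k p, sing_eq_ws k q,
            d_concat' D (hval p hp1 hp2 q hq.1 hq.2)]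
        -- inner expansion : d Z' (sing q) = concatLR [] q.1 Z' for q in S₂
        have inner2 : ∀ q : RBWord X, q.1 ≠ [] → hB q.1 = hB v₀ →
            D.d (D.d (ws u) (ws [c])) (sing k q)
              = concatLR k X [] q.1 (D.d (ws u) (ws [c])) := by
          intro q hq1 hq2
          have key := apply_eq_of_supp k (g := D.d.flip (sing k q))
            (h := concatLR k X [] q.1) (x := D.d (ws u) (ws [c])) hSZ ?_
          · simpa only [LinearMap.flip_apply] using key
          · intro p hp
            rw [LinearMap.flip_apply, concatLR_sing_left_nil, sing_eq_ws k p,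
              sing_eq_ws k q, d_concat' D (hval p hp.1 hp.2 q hq1 hq2)]
        -- LHS = d Z' W
        have hL : D.d (D.d (ws u) (ws ([c] ++ v₀))) (ws w)
            = D.d (D.d (ws u) (ws [c])) (D.d (ws v₀) (ws w)) := by
          rw [d_right_apply D (show [c] ≠ [] by simp) hv (ws u)]
          have key := apply_eq_of_supp k
            (g := (D.d.flip (ws w)).comp (concatLR k X [] v₀))
            (h := D.d.flip (D.d (ws v₀) (ws w)))
            (x := D.d (ws u) (ws [c])) hSZ ?_
          · simpa only [LinearMap.comp_apply, LinearMap.flip_apply] using key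
          · intro p hp
            simp only [LinearMap.comp_apply, LinearMap.flip_apply, concatLR_sing_left_nil]
            have hpv : wordValid (p.1 ++ v₀) := by
              apply wordValid_append p.2 hv0
              rw [hp.2, lB_singleton]
              exact hjc
            rw [d_left D hv₀ hpv, LinearMap.comp_apply]
            exact (inner1 p hp.1 hp.2).symm
        -- RHS = d Z' W
        have hR : D.d (ws u) (D.d (ws ([c] ++ v₀)) (ws w))
            = D.d (D.d (ws u) (ws [c])) (D.d (ws v₀) (ws w)) := by
          rw [d_left D hv₀ hv]
          simp only [LinearMap.comp_apply]
          have key := apply_eq_of_supp k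
            (g := (D.d (ws u)).comp (concatLR k X [c] []))
            (h := D.d (D.d (ws u) (ws [c])))
            (x := D.d (ws v₀) (ws w)) hSW ?_
          · simpa only [LinearMap.comp_apply] using key
          · intro q hq
            simp only [LinearMap.comp_apply, concatLR_nil_sing]
            have hcq : wordValid ([c] ++ q.1) := by
              apply wordValid_append hc1 q.2
              rw [hq.2, lB_singleton]
              exact hjc
            rw [d_right_apply D (show [c] ≠ [] by simp) hcq (ws u)]
            exact (inner2 q hq.1 hq.2).symm
        rw [hL, hR]
      -- ============ Case D : u, v, w singletons ============
      · obtain ⟨cu, rfl⟩ : ∃ a, u = [a] := by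
          cases u with
          | nil => exact absurd rfl hun
          | cons a t =>
            cases t with
            | nil => exact ⟨a, rfl⟩
            | cons b t' => simp at hu2
        obtain ⟨cv, rfl⟩ : ∃ a, v = [a] := by
          cases v with
          | nil => exact absurd rfl hvn
          | cons a t =>
            cases t with
            | nil => exact ⟨a, rfl⟩
            | cons b t' => simp at hv2
        obtain ⟨cw, rfl⟩ : ∃ a, w = [a] := by
          cases w with
          | nil => exact absurd rfl hwn
          | cons a t =>
            cases t with
            | nil => exact ⟨a, rfl⟩
            | cons b t' => simp at hw2
        by_cases hj1 : cu.isBr = true ∧ cv.isBr = true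
        · by_cases hj2 : cv.isBr = true ∧ cw.isBr = true
          -- ====== the bracket-bracket-bracket case ======
          · obtain ⟨a, rfl⟩ : ∃ a, cu = br a := by
              cases cu with
              | var x => simp [isBr] at hj1
              | br a => exact ⟨a, rfl⟩
            obtain ⟨b, rfl⟩ : ∃ b, cv = br b := by
              cases cv with
              | var x => simp [isBr] at hj1
              | br b => exact ⟨b, rfl⟩
            obtain ⟨c, rfl⟩ : ∃ c, cw = br c := by
              cases cw with
              | var x => simp [isBr] at hj2
              | br c => exact ⟨c, rfl⟩
            have hva : wordValid a := (wordValid_br_iff a).mp hu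
            have hvb : wordValid b := (wordValid_br_iff b).mp hv
            have hvc : wordValid c := (wordValid_br_iff c).mp hw
            have hdeg : degW a + 1 + (degW b + 1) + (degW c + 1) ≤ N + 1 := by
              rw [degW_br, degW_br, degW_br] at hd
              omega
            have hwa : wordValid [br a] := hu
            have hwb : wordValid [br b] := hv
            have hwc : wordValid [br c] := hw
            -- the seven induction hypotheses, in `Pop` form
            have I1 := ihN (a.length + 2) a [br b] [br c] hva hwb hwc
              (by rw [degW_br, degW_br]; omega)
              (by simp only [List.length_cons, List.length_nil]; omega)
            have I2 := ihN (b.length + 2) [br a] b [br c] hwa hvb hwc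
              (by rw [degW_br, degW_br]; omega)
              (by simp only [List.length_cons, List.length_nil]; omega)
            have I3 := ihN (c.length + 2) [br a] [br b] c hwa hwb hvc
              (by rw [degW_br, degW_br]; omega)
              (by simp only [List.length_cons, List.length_nil]; omega)
            have I4 := ihN (a.length + b.length + 1) a b [br c] hva hvb hwc
              (by rw [degW_br]; omega)
              (by simp only [List.length_cons, List.length_nil]; omega)
            have I5 := ihN (a.length + c.length + 1) a [br b] c hva hwb hvc
              (by rw [degW_br]; omega)
              (by simp only [List.length_cons, List.length_nil]; omega)
            have I6 := ihN (b.length + c.length + 1) [br a] b c hwa hvb hvc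
              (by rw [degW_br]; omega)
              (by simp only [List.length_cons, List.length_nil]; omega)
            have I7 := ihN (a.length + b.length + c.length) a b c hva hvb hvc
              (by omega) (by omega)
            rw [← Pop_ws k b, ← Pop_ws k c] at I1
            rw [← Pop_ws k a, ← Pop_ws k c] at I2
            rw [← Pop_ws k a, ← Pop_ws k b] at I3
            rw [← Pop_ws k c] at I4
            rw [← Pop_ws k b] at I5
            rw [← Pop_ws k a] at I6
            rw [← Pop_ws k a, ← Pop_ws k b, ← Pop_ws k c]
            simp only [d_rb D, map_add, map_smul, LinearMap.add_apply,
              LinearMap.smul_apply, smul_add]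
            rw [I1, I2, I4, I5, I6, I7, ← I3]
            simp only [d_rb D, map_add, map_smul, LinearMap.add_apply,
              LinearMap.smul_apply, smul_add]
            abel
          -- ====== junction (v,w) compatible ======
          · have h2 : wordValid ([cv] ++ [cw]) := by
              apply wordValid_append hv hw
              rw [lB_singleton, hB_singleton]
              exact hj2
            rw [show D.d (ws [cv]) (ws [cw]) = ws ([cv] ++ [cw]) from d_concat' D h2,
              show ([cv] ++ [cw] : List (RBL X)) = [cv] ++ [cw] from rfl]
            rw [d_right_apply D (show [cv] ≠ [] by simp) h2 (ws [cu])]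
            have hsupp : ∀ p ∈ (D.d (ws [cu]) (ws [cv])).support,
                p ∈ {p : RBWord X | p.1 ≠ [] ∧ lB p.1 = lB [cv]} := by
              intro p hp
              obtain ⟨ha, -, hb⟩ := supp_d D (by simp) (by simp) hu hv p hp
              exact ⟨ha, hb⟩
            have key := apply_eq_of_supp k
              (g := D.d.flip (ws [cw]))
              (h := concatLR k X [] [cw])
              (x := D.d (ws [cu]) (ws [cv])) hsupp ?_
            · simpa only [LinearMap.flip_apply] using key
            · intro p hp
              rw [LinearMap.flip_apply, concatLR_sing_left_nil, sing_eq_ws k p]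
              apply d_concat' D
              apply wordValid_append p.2 hw
              rw [hp.2, lB_singleton, hB_singleton]
              exact hj2
        -- ====== junction (u,v) compatible ======
        · have h2 : wordValid ([cu] ++ [cv]) := by
            apply wordValid_append hu hv
            rw [lB_singleton, hB_singleton]
            exact hj1
          rw [show D.d (ws [cu]) (ws [cv]) = ws ([cu] ++ [cv]) from d_concat' D h2,
            d_left D (show [cv] ≠ [] by simp) h2]
          simp only [LinearMap.comp_apply]
          have hsupp : ∀ p ∈ (D.d (ws [cv]) (ws [cw])).support,
              p ∈ {p : RBWord X | p.1 ≠ [] ∧ hB p.1 = hB [cv]} := by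
            intro p hp
            obtain ⟨ha, hb, -⟩ := supp_d D (by simp) (by simp) hv hw p hp
            exact ⟨ha, hb⟩
          have key := apply_eq_of_supp k
            (g := D.d (ws [cu]))
            (h := concatLR k X [cu] [])
            (x := D.d (ws [cv]) (ws [cw])) hsupp ?_
          · simpa only [] using key.symm
          · intro p hp
            rw [concatLR_nil_sing, sing_eq_ws k p]
            apply d_concat' D
            apply wordValid_append hu p.2
            rw [hp.2, lB_singleton, hB_singleton]
            exact hj1

end Aux6
section Phi

open RBL

variable {k : Type v} [CommRing k] {X : Type u} {lam : k}
variable {R : Type*} [Ring R] [Algebra k R]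

mutual
  /-- Value of the universal morphism on a letter. -/
  noncomputable def phiL (Q : R → R) (f : X → R) : RBL X → R
    | .var x => f x
    | .br l => Q (phiW Q f l)
  /-- Value of the universal morphism on a word. -/
  noncomputable def phiW (Q : R → R) (f : X → R) : List (RBL X) → R
    | [] => 1
    | a :: l => phiL Q f a * phiW Q f l
end

variable (Q : R → R) (f : X → R)

lemma phiW_nil : phiW Q f [] = 1 := by simp [phiW]

lemma phiW_cons (a : RBL X) (l : List (RBL X)) :
    phiW Q f (a :: l) = phiL Q f a * phiW Q f l := by simp [phiW]

lemma phiL_var (x : X) : phiL Q f (var x) = f x := by simp [phiL]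

lemma phiL_br (l : List (RBL X)) : phiL Q f (br l) = Q (phiW Q f l) := by simp [phiL]

lemma phiW_append (l₁ l₂ : List (RBL X)) :
    phiW Q f (l₁ ++ l₂) = phiW Q f l₁ * phiW Q f l₂ := by
  induction l₁ with
  | nil => simp [phiW_nil]
  | cons a t ih => rw [List.cons_append, phiW_cons, phiW_cons, ih, mul_assoc]

/-- The universal morphism. -/
noncomputable def phi : RBMod k X →ₗ[k] R :=
  Finsupp.linearCombination k (fun w : RBWord X => phiW Q f w.1)

lemma phi_sing (w : RBWord X) : phi Q f (sing k w) = phiW Q f w.1 := by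
  unfold phi sing
  rw [Finsupp.linearCombination_single, one_smul]

lemma phi_ws {l : List (RBL X)} (h : wordValid l) :
    phi Q f (ws l : RBMod k X) = phiW Q f l := by
  erw [ws_eq_sing k h, phi_sing]

variable (Ql : R →ₗ[k] R)

lemma phi_Pop : ∀ x : RBMod k X, phi ⇑Ql f (Pop k X x) = Ql (phi ⇑Ql f x) := by
  have key : (phi (X := X) ⇑Ql f).comp (Pop k X) = Ql.comp (phi ⇑Ql f) := by
    apply lhom_ext_sing
    intro w
    simp only [LinearMap.comp_apply]
    erw [Pop_sing, phi_sing, phi_sing]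
    show phiW ⇑Ql f [br w.1] = Ql (phiW ⇑Ql f w.1)
    rw [phiW_cons, phiW_nil, phiL_br, mul_one]
  intro x
  exact LinearMap.congr_fun key x

lemma phi_mul_key (hQ : ∀ u v : R, Ql u * Ql v = Ql (u * Ql v) + Ql (Ql u * v) + lam • Ql (u * v))
    (D : FreeRBAData k X lam) :
    ∀ n : ℕ, ∀ lu lv : List (RBL X), wordValid lu → wordValid lv → degW lu + degW lv ≤ n →
      phi ⇑Ql f (D.d (ws lu) (ws lv)) = phiW ⇑Ql f lu * phiW ⇑Ql f lv := by
  intro n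
  induction n with
  | zero =>
    intro lu lv hlu hlv hd
    have h1 : lu = [] := nil_of_degW_eq_zero (by omega)
    subst h1
    rw [← one_ws, d_one_left, phi_ws _ _ hlv, phiW_nil, one_mul]
  | succ n ih =>
    intro lu lv hlu hlv hd
    rcases eq_or_ne lu [] with rfl | hlun
    · rw [← one_ws, d_one_left, phi_ws _ _ hlv, phiW_nil, one_mul]
    rcases eq_or_ne lv [] with rfl | hlvn
    · rw [← one_ws, d_one_right, phi_ws _ _ hlu, phiW_nil, mul_one]
    rcases List.eq_nil_or_concat lu with rfl | ⟨u₀, cu, rfl⟩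
    · exact absurd rfl hlun
    simp only [List.concat_eq_append] at hlu hd ⊢
    cases lv with
    | nil => exact absurd rfl hlvn
    | cons cv v₀ =>
    by_cases hj : cu.isBr = true ∧ cv.isBr = true
    · obtain ⟨a, rfl⟩ : ∃ a, cu = br a := by
        cases cu with
        | var x => simp [isBr] at hj
        | br a => exact ⟨a, rfl⟩
      obtain ⟨b, rfl⟩ : ∃ b, cv = br b := by
        cases cv with
        | var x => simp [isBr] at hj
        | br b => exact ⟨b, rfl⟩
      have hva : wordValid a := (wordValid_br_iff a).mp hlu.right
      have hvb : wordValid b := by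
        have := ((wordValid_iff _).mp hlv).1 (br b) (by simp)
        simpa [valid] using this
      have hwb : wordValid [br b] := (wordValid_br_iff b).mpr hvb
      have hu₀ : wordValid u₀ := hlu.left
      have hv₀ : wordValid v₀ := (show wordValid ([br b] ++ v₀) from hlv).right
      have hlBu : ¬ lB u₀ = true := fun h =>
        junction_ok hlu ⟨h, by simp [hB_singleton, isBr]⟩
      have hhBv : ¬ hB v₀ = true := fun h =>
        junction_ok (show wordValid ([br b] ++ v₀) from hlv) ⟨by simp [lB_singleton, isBr], h⟩
      have hdd : degW a + degW b + 2 ≤ n + 1 := by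
        rw [degW_append, degW_br, degW_cons] at hd
        have hb1 : degL (br b) = degW b + 1 := by simp [degL]
        omega
      rw [d_br' D hlu hlv]
      have hval2 : ∀ s, wordValid s → wordValid (u₀ ++ [br s] ++ v₀) := by
        intro s hs
        exact wordValid_append
          (wordValid_append hu₀ ((wordValid_br_iff s).mpr hs) (fun hh => hlBu hh.1))
          hv₀ (fun hh => hhBv hh.2)
      have hconc : phi ⇑Ql f (concatLR k X u₀ v₀ (Tel D a b))
          = phiW ⇑Ql f u₀ * phi ⇑Ql f (Tel D a b) * phiW ⇑Ql f v₀ := by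
        have key := apply_eq_of_supp k
          (g := (phi ⇑Ql f).comp (concatLR k X u₀ v₀))
          (h := ((LinearMap.mulRight k (phiW ⇑Ql f v₀)).comp
            ((LinearMap.mulLeft k (phiW ⇑Ql f u₀)).comp (phi ⇑Ql f))))
          (x := Tel D a b) (S := {p : RBWord X | ∃ s, wordValid s ∧ p.1 = [br s]}) ?_ ?_
        · simpa only [LinearMap.comp_apply, LinearMap.mulLeft_apply,
            LinearMap.mulRight_apply] using key
        · intro p hp
          obtain ⟨s, hs⟩ := supp_Tel D a b p hp
          exact ⟨s, (wordValid_br_iff s).mp (hs ▸ p.2), hs⟩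
        · rintro p ⟨s, hsv, hs⟩
          simp only [LinearMap.comp_apply, LinearMap.mulLeft_apply, LinearMap.mulRight_apply]
          rw [concatLR_sing, phi_sing, hs, phi_ws _ _ (hval2 s hsv), phiW_append, phiW_append]
      rw [hconc]
      rw [show phi ⇑Ql f (Tel D a b)
            = Ql (phi ⇑Ql f (D.d (Pop k X (ws a)) (ws b)))
              + Ql (phi ⇑Ql f (D.d (ws a) (Pop k X (ws b))))
              + lam • Ql (phi ⇑Ql f (D.d (ws a) (ws b))) from by
          unfold Tel
          simp only [map_add, map_smul]
          rw [phi_Pop, phi_Pop, phi_Pop]]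
      rw [Pop_ws k a, Pop_ws k b]
      rw [ih [br a] b hlu.right hvb (by rw [degW_br]; omega),
        ih a [br b] hva hwb (by rw [degW_br]; omega),
        ih a b hva hvb (by omega)]
      simp only [phiW_append, phiW_cons, phiW_nil, phiL_br, mul_one]
      rw [add_comm (Ql (Ql (phiW ⇑Ql f a) * phiW ⇑Ql f b))
        (Ql (phiW ⇑Ql f a * Ql (phiW ⇑Ql f b))), ← hQ]
      simp [mul_assoc]
    · have hval : wordValid ((u₀ ++ [cu]) ++ (cv :: v₀)) := by
        apply wordValid_append hlu hlv
        rw [lB_concat, hB_cons]; exact hj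
      rw [d_concat' D hval, phi_ws _ _ hval, phiW_append]

lemma phi_mul (hQ : ∀ u v : R, Ql u * Ql v = Ql (u * Ql v) + Ql (Ql u * v) + lam • Ql (u * v))
    (D : FreeRBAData k X lam) (x y : RBMod k X) :
    phi ⇑Ql f (D.d x y) = phi ⇑Ql f x * phi ⇑Ql f y := by
  induction x using Finsupp.induction_linear with
  | zero => simp
  | add x₁ x₂ h₁ h₂ => simp [map_add, LinearMap.add_apply, h₁, h₂, add_mul]
  | single w c =>
    induction y using Finsupp.induction_linear with
    | zero => simp
    | add y₁ y₂ h₁ h₂ => simp [map_add, h₁, h₂, mul_add]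
    | single w' c' =>
      rw [single_eq_smul_sing, single_eq_smul_sing]
      simp only [map_smul, LinearMap.smul_apply, LinearMap.map_smul]
      rw [sing_eq_ws k w, sing_eq_ws k w',
        phi_mul_key f Ql hQ D (degW w.1 + degW w'.1) w.1 w'.1 w.2 w'.2 le_rfl,
        phi_ws _ _ w.2, phi_ws _ _ w'.2]
      rw [smul_mul_assoc, mul_smul_comm, smul_comm c' c]


lemma phi_unique (D : FreeRBAData k X lam) (ψ : RBMod k X →ₗ[k] R)
    (h1 : ψ (sing k RBWord.one) = 1)
    (h2 : ∀ a b : RBMod k X, ψ (D.d a b) = ψ a * ψ b)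
    (h3 : ∀ a : RBMod k X, ψ (Pop k X a) = Ql (ψ a))
    (h4 : ∀ x : X, ψ (sing k ⟨[var x], wordValid_var x⟩) = f x) :
    ψ = phi ⇑Ql f := by
  apply lhom_ext_sing
  suffices key : ∀ (n : ℕ) (l : List (RBL X)) (hl : wordValid l), degW l ≤ n →
      ψ (sing k ⟨l, hl⟩) = phiW ⇑Ql f l by
    intro w
    obtain ⟨l, hl⟩ := w
    erw [phi_sing]
    exact key (degW l) l hl le_rfl
  intro n
  induction n with
  | zero =>
    intro l hl hd
    have h0 : l = [] := nil_of_degW_eq_zero (by omega)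
    subst h0
    rw [show (⟨[], hl⟩ : RBWord X) = RBWord.one from rfl, h1, phiW_nil]
  | succ n ih =>
    intro l hl hd
    cases l with
    | nil => rw [show (⟨[], hl⟩ : RBWord X) = RBWord.one from rfl, h1, phiW_nil]
    | cons a l' =>
      cases l' with
      | nil =>
        cases a with
        | var x =>
          rw [show (⟨[var x], hl⟩ : RBWord X) = ⟨[var x], wordValid_var x⟩ from rfl, h4,
            phiW_cons, phiW_nil, phiL_var, mul_one]
        | br m =>
          have hm : wordValid m := (wordValid_br_iff m).mp hl
          rw [show sing k ⟨[br m], hl⟩ = Pop k X (sing k ⟨m, hm⟩) from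
            (Pop_sing k ⟨m, hm⟩).symm, h3,
            ih m hm (by rw [degW_br] at hd; omega),
            phiW_cons, phiW_nil, phiL_br, mul_one]
      | cons b l'' =>
        have hsplit : wordValid ([a] ++ (b :: l'')) := hl
        have e : D.d (ws [a]) (ws (b :: l'')) = sing k ⟨a :: b :: l'', hl⟩ :=
          (d_concat' D hsplit).trans (ws_eq_sing k hsplit)
        rw [← e, h2, ws_eq_sing k hsplit.left, ws_eq_sing k hsplit.right]
        have hda : degW [a] ≤ n := by
          rw [degW_cons, degW_cons] at hd
          have := degL_pos b
          simp only [degW_cons, degW_nil]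
          omega
        have hdl : degW (b :: l'') ≤ n := by
          rw [degW_cons] at hd
          have := degL_pos a
          omega
        rw [ih [a] hsplit.left hda, ih (b :: l'') hsplit.right hdl, ← phiW_append]
        rfl

end Phi
/-- `(kX_∞, ⋄, P)` is the free Rota-Baxter algebra of weight `lam` on `X`:
`(kX_∞, ⋄)` is a unital associative `k`-algebra, `P` satisfies the Rota-Baxter identity, and
for every Rota-Baxter algebra `(R, Q)` of weight `lam` and every set map `f : X → R` there is
a unique `k`-algebra homomorphism `φ : kX_∞ → R` with `φ ∘ P = Q ∘ φ` and `φ(j_X(x)) = f(x)`. -/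
theorem free_rota_baxter_algebra
    {k : Type v} [CommRing k] {X : Type u} {lam : k} (D : FreeRBAData k X lam) :
    (∀ f : RBMod k X, D.d (sing k RBWord.one) f = f) ∧
    (∀ f : RBMod k X, D.d f (sing k RBWord.one) = f) ∧
    (∀ f g h : RBMod k X, D.d (D.d f g) h = D.d f (D.d g h)) ∧
    (∀ f g : RBMod k X,
      D.d (Pop k X f) (Pop k X g)
        = Pop k X (D.d f (Pop k X g)) + Pop k X (D.d (Pop k X f) g)
          + lam • Pop k X (D.d f g)) ∧
    (∀ (R : Type w) [Ring R] [Algebra k R] (Q : R →ₗ[k] R),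
      (∀ u v : R, Q u * Q v = Q (u * Q v) + Q (Q u * v) + lam • Q (u * v)) →
      ∀ f : X → R, ∃! φ : RBMod k X →ₗ[k] R,
        φ (sing k RBWord.one) = 1 ∧
        (∀ a b : RBMod k X, φ (D.d a b) = φ a * φ b) ∧
        (∀ a : RBMod k X, φ (Pop k X a) = Q (φ a)) ∧
        (∀ x : X, φ (sing k ⟨[RBL.var x], RBL.wordValid_var x⟩) = f x)) := by
  classical
  refine ⟨d_one_left D, d_one_right D, ?_, d_rb D, ?_⟩
  · intro x y z
    induction x using Finsupp.induction_linear with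
    | zero => simp
    | add x₁ x₂ ih₁ ih₂ => simp only [map_add, LinearMap.add_apply, ih₁, ih₂]
    | single wx cx =>
      induction y using Finsupp.induction_linear with
      | zero => simp
      | add y₁ y₂ ih₁ ih₂ =>
        simp only [map_add, LinearMap.add_apply, LinearMap.map_add, ih₁, ih₂]
      | single wy cy =>
        induction z using Finsupp.induction_linear with
        | zero => simp
        | add z₁ z₂ ih₁ ih₂ => simp only [map_add, ih₁, ih₂]
        | single wz cz =>
          rw [single_eq_smul_sing, single_eq_smul_sing, single_eq_smul_sing]
          simp only [map_smul, LinearMap.smul_apply]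
          rw [sing_eq_ws k wx, sing_eq_ws k wy, sing_eq_ws k wz,
            d_assoc_key D (RBL.degW wx.1 + RBL.degW wy.1 + RBL.degW wz.1)
              (wx.1.length + wy.1.length + wz.1.length) wx.1 wy.1 wz.1
              wx.2 wy.2 wz.2 le_rfl le_rfl]
  · intro R _ _ Q hQ f
    refine ⟨phi ⇑Q f, ⟨?_, ?_, ?_, ?_⟩, ?_⟩
    · rw [phi_sing]
      exact phiW_nil ⇑Q f
    · exact phi_mul f Q hQ D
    · exact phi_Pop f Q
    · intro x
      erw [phi_sing, phiW_cons, phiW_nil, phiL_var, mul_one]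
    · rintro ψ ⟨hp1, hp2, hp3, hp4⟩
      exact phi_unique f Q D ψ hp1 hp2 hp3 hp4
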